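/- Let J₁, J₂ ∈ ℂ with J₁ ≠ 0 and J₂ ≠ 0. Define the half-line SSH operator H♯ on ℓ²(ℕ, ℂ) by (H♯ψ)_0 = J₁ψ_1, (H♯ψ)_{2n+1} = conj(J₁)ψ_{2n} + J₂ψ_{2n+2}, and (H♯ψ)_{2n+2} = conj(J₂)ψ_{2n+1} + J₁ψ_{2n+3} for n ≥ 0. Then there exists a nonzero ψ ∈ ℓ²(ℕ, ℂ) with H♯ψ = 0 if and only if |J₁| < |J₂|. -/

import Mathlib

open scoped ComplexConjugate

noncomputable section

/-- ℓ²(ℕ, ℂ) -/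
abbrev L2N : Type := lp (fun _ : ℕ => ℂ) 2

/-- the half-line SSH operator with alternating hoppings J₁, J₂ has a
nonzero square-summable zero mode if and only if |J₁| < |J₂|. -/
theorem statement8 (J₁ J₂ : ℂ) (hJ₁ : J₁ ≠ 0) (hJ₂ : J₂ ≠ 0)
    (H : L2N →L[ℂ] L2N)
    (h0 : ∀ ψ : L2N, H ψ 0 = J₁ * ψ 1)
    (hodd : ∀ (ψ : L2N) (n : ℕ),
      H ψ (2 * n + 1) = conj J₁ * ψ (2 * n) + J₂ * ψ (2 * n + 2))
    (heven : ∀ (ψ : L2N) (n : ℕ),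
      H ψ (2 * n + 2) = conj J₂ * ψ (2 * n + 1) + J₁ * ψ (2 * n + 3)) :
    (∃ ψ : L2N, ψ ≠ 0 ∧ H ψ = 0) ↔ ‖J₁‖ < ‖J₂‖ := by
  set r : ℂ := -(conj J₁ / J₂) with hr
  have hrne : r ≠ 0 := by
    simp [hr, div_eq_zero_iff, hJ₂, map_eq_zero, hJ₁]
  have habsr : ‖r‖ = ‖J₁‖ / ‖J₂‖ := by
    simp [hr, norm_div, Complex.norm_conj]
  set q : ℝ := ‖r‖ with hq
  have hq0 : 0 < q := by
    simpa [hq] using (norm_pos_iff.mpr hrne)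
  have hJ₂0 : 0 < ‖J₂‖ := norm_pos_iff.mpr hJ₂
  have hiff : ‖J₁‖ < ‖J₂‖ ↔ q < 1 := by
    rw [habsr, div_lt_one hJ₂0]
  rw [hiff]
  constructor
  · rintro ⟨ψ, hψ, hH⟩
    have hcoord : ∀ k, H ψ k = 0 := by
      intro k; rw [hH]; rfl
    have h1 : ψ 1 = 0 := by
      have := (h0 ψ).symm
      rw [hcoord 0] at this
      exact (mul_eq_zero.mp this).resolve_left hJ₁
    have hoddz : ∀ n, ψ (2 * n + 1) = 0 := by
      intro n
      induction n with
      | zero => simpa using h1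
      | succ m ih =>
        have := (heven ψ m).symm
        rw [hcoord (2 * m + 2), ih, mul_zero, zero_add] at this
        have h3 : ψ (2 * m + 3) = 0 := (mul_eq_zero.mp this).resolve_left hJ₁
        have : 2 * (m + 1) + 1 = 2 * m + 3 := by ring
        rw [this]; exact h3
    have hrec : ∀ n, ψ (2 * n + 2) = r * ψ (2 * n) := by
      intro n
      have := (hodd ψ n).symm
      rw [hcoord (2 * n + 1)] at this
      have hJr : J₂ * r = -conj J₁ := by rw [hr]; field_simp
      apply mul_left_cancel₀ hJ₂
      rw [← mul_assoc, hJr]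
      linear_combination this
    have hpow : ∀ n, ψ (2 * n) = r ^ n * ψ 0 := by
      intro n
      induction n with
      | zero => simp
      | succ m ih =>
        have h2 : 2 * (m + 1) = 2 * m + 2 := by ring
        rw [h2, hrec m, ih]
        ring
    have h00 : ψ 0 ≠ 0 := by
      intro h0'
      apply hψ
      apply lp.ext
      funext k
      rcases Nat.even_or_odd k with ⟨m, hm⟩ | ⟨m, hm⟩
      · have : k = 2 * m := by omega
        rw [this]
        show ψ (2 * m) = 0
        rw [hpow m, h0', mul_zero]
      · have : k = 2 * m + 1 := by omega
        rw [this]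
        exact hoddz m
    have htre : ((2 : ENNReal)).toReal = (2 : ℝ) := by norm_num
    have hsum : Summable fun k => ‖ψ k‖ ^ (2 : ℝ) := by
      have h := (lp.memℓp ψ).summable (p := 2) (by rw [htre]; norm_num)
      simpa only [htre] using h
    have hs2 : Summable fun n : ℕ => ‖ψ (2 * n)‖ ^ (2 : ℝ) :=
      hsum.comp_injective (mul_right_injective₀ (two_ne_zero))
    have hs3 : Summable fun n : ℕ => (q ^ 2) ^ n * ‖ψ 0‖ ^ 2 := by
      refine hs2.congr fun n => ?_
      rw [hpow n]
      rw [show ((2 : ℝ)) = ((2 : ℕ) : ℝ) by norm_num, Real.rpow_natCast]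
      simp only [norm_mul, norm_pow, mul_pow, ← hq]
      ring
    have hs4 : Summable fun n : ℕ => (q ^ 2) ^ n := by
      have hne : (‖ψ 0‖ ^ 2 : ℝ) ≠ 0 := by
        simpa using h00
      have := hs3.mul_right ((‖ψ 0‖ ^ 2)⁻¹)
      refine this.congr fun n => ?_
      field_simp
    have hq2 : q ^ 2 < 1 := by
      have h0' := hs4.tendsto_atTop_zero
      have := tendsto_pow_atTop_nhds_zero_iff.mp h0'
      rwa [abs_of_nonneg (by positivity)] at this
    nlinarith
  · intro hqlt
    set f : ℕ → ℂ := fun k => if k % 2 = 0 then r ^ (k / 2) else 0 with hf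
    have hq1 : q ≤ 1 := le_of_lt hqlt
    have hmem : Memℓp f 2 := by
      apply memℓp_gen
      have hbound : ∀ k : ℕ, ‖f k‖ ^ (2 : ℝ) ≤ q⁻¹ * q ^ k := by
        intro k
        rw [show ((2 : ℝ)) = ((2 : ℕ) : ℝ) by norm_num, Real.rpow_natCast]
        by_cases hk : k % 2 = 0
        · have : ‖f k‖ ^ 2 = q ^ (2 * (k / 2)) := by
            simp [hf, hk, ← hq, pow_mul, ← pow_mul, mul_comm]
          rw [this]
          have h1 : q ^ (2 * (k / 2)) ≤ q ^ (k - 1) :=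
            pow_le_pow_of_le_one (le_of_lt hq0) hq1 (by omega)
          have h2 : q ^ (k - 1) ≤ q⁻¹ * q ^ k := by
            rcases Nat.eq_zero_or_pos k with hk0 | hk0
            · subst hk0
              simp only [pow_zero, Nat.zero_sub]
              rw [mul_one, one_le_inv_iff₀]
              exact ⟨hq0, hq1⟩
            · have : k - 1 + 1 = k := by omega
              rw [← this, pow_succ]
              rw [← this] at *
              rw [mul_comm, mul_assoc, mul_inv_cancel₀ hq0.ne', mul_one]
              simp
          linarith
        · simp [hf, hk]
          positivity
      refine Summable.of_nonneg_of_le (fun k => by positivity) hbound ?_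
      exact (summable_geometric_of_lt_one (le_of_lt hq0) hqlt).mul_left _
    set ψ : L2N := ⟨f, hmem⟩ with hψdef
    have hco : ∀ k, ψ k = f k := fun k => rfl
    have hfe : ∀ n : ℕ, f (2 * n) = r ^ n := by
      intro n
      simp only [hf]
      rw [if_pos (by omega), Nat.mul_div_cancel_left _ (by norm_num)]
    have hfo : ∀ n : ℕ, f (2 * n + 1) = 0 := by
      intro n
      simp only [hf]
      rw [if_neg (by omega)]
    refine ⟨ψ, ?_, ?_⟩
    · intro h
      have : ψ 0 = 0 := by rw [h]; rfl
      rw [hco 0] at this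
      have : f 0 = (1 : ℂ) := by simpa [hf] using rfl
      simp only [hf] at *
      norm_num at *
    · apply lp.ext
      funext k
      show H ψ k = (0 : L2N) k
      rw [show ((0 : L2N) k = 0) from rfl]
      rcases Nat.even_or_odd k with ⟨m, hm⟩ | ⟨m, hm⟩
      · rcases Nat.eq_zero_or_pos m with h0' | h0'
        · have : k = 0 := by omega
          rw [this, h0 ψ, hco 1]
          have : (1 : ℕ) = 2 * 0 + 1 := by norm_num
          rw [this, hfo 0, mul_zero]
        · have hk : k = 2 * (m - 1) + 2 := by omega
          rw [hk, heven ψ (m - 1), hco, hco]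
          have e1 : 2 * (m - 1) + 1 = 2 * (m - 1) + 1 := rfl
          rw [hfo (m - 1)]
          have e2 : 2 * (m - 1) + 3 = 2 * (m - 1 + 1) + 1 := by omega
          rw [e2, hfo (m - 1 + 1)]
          ring
      · have hk : k = 2 * m + 1 := by omega
        rw [hk, hodd ψ m, hco, hco]
        have e2 : 2 * m + 2 = 2 * (m + 1) := by ring
        rw [e2, hfe m, hfe (m + 1)]
        rw [hr]
        have hc : J₂ * (-(conj J₁ / J₂)) = -conj J₁ := by field_simp
        rw [pow_succ]
        linear_combination (-(conj J₁ / J₂)) ^ m * hc
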